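/- Let w ∈ L¹(a,b) and ξ ∈ (a,b) be such that (1/|h|)∫_ξ^{ξ+h} w(t) dt → +∞ as h → 0. Then w is not of bounded mean oscillation on (a,b); that is, sup over subintervals I of (1/|I|)∫_I |w - w_I| is infinite, where w_I = (1/|I|)∫_I w. -/

import Mathlib

open intervalIntegral Set

private lemma osc_lower (ξ h C c d : ℝ) (w : ℝ → ℝ)
    (hc : c = ξ - h) (hd : d = ξ + h) (hh0 : 0 < h)
    (hIcd : IntervalIntegrable w MeasureTheory.volume c d)
    (h1 : (C + 1) * h ≤ ∫ t in ξ..d, w t)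
    (h2 : (C + 1) * h ≤ -∫ t in c..ξ, w t) :
    ¬ ((∫ t in c..d, |w t - (∫ s in c..d, w s) / (d - c)|) / (d - c) ≤ C) := by
  subst hc hd
  intro hC
  set m : ℝ := (∫ s in (ξ - h)..(ξ + h), w s) / ((ξ + h) - (ξ - h)) with hmdef
  have hcξ : ξ - h ≤ ξ := by linarith
  have hξd : ξ ≤ ξ + h := by linarith
  have hsub1 : Set.uIcc (ξ - h) ξ ⊆ Set.uIcc (ξ - h) (ξ + h) := by
    rw [Set.uIcc_of_le hcξ, Set.uIcc_of_le (by linarith)]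
    exact Set.Icc_subset_Icc le_rfl (by linarith)
  have hsub2 : Set.uIcc ξ (ξ + h) ⊆ Set.uIcc (ξ - h) (ξ + h) := by
    rw [Set.uIcc_of_le hξd, Set.uIcc_of_le (by linarith)]
    exact Set.Icc_subset_Icc (by linarith) le_rfl
  have hIwm : IntervalIntegrable (fun t => w t - m) MeasureTheory.volume
      (ξ - h) (ξ + h) := hIcd.sub intervalIntegrable_const
  have hIg1 := (hIwm.mono_set hsub1).abs
  have hIg2 := (hIwm.mono_set hsub2).abs
  have hconst1 : (∫ _ in (ξ - h)..ξ, m) = h * m := by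
    simp [intervalIntegral.integral_const]
  have hconst2 : (∫ _ in ξ..(ξ + h), m) = h * m := by
    simp [intervalIntegral.integral_const]
  have hL : h * m + (C + 1) * h ≤ ∫ t in (ξ - h)..ξ, |w t - m| := by
    have hle : -(∫ t in (ξ - h)..ξ, (w t - m)) ≤ |∫ t in (ξ - h)..ξ, (w t - m)| :=
      neg_le_abs _
    have habs : |∫ t in (ξ - h)..ξ, (w t - m)| ≤ ∫ t in (ξ - h)..ξ, |w t - m| :=
      intervalIntegral.abs_integral_le_integral_abs hcξ
    have hsplit : (∫ t in (ξ - h)..ξ, (w t - m))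
        = (∫ t in (ξ - h)..ξ, w t) - h * m := by
      rw [intervalIntegral.integral_sub (hIcd.mono_set hsub1) intervalIntegrable_const,
        hconst1]
    rw [hsplit] at hle habs
    linarith
  have hR : (C + 1) * h - h * m ≤ ∫ t in ξ..(ξ + h), |w t - m| := by
    have hle : (∫ t in ξ..(ξ + h), (w t - m)) ≤ |∫ t in ξ..(ξ + h), (w t - m)| :=
      le_abs_self _
    have habs : |∫ t in ξ..(ξ + h), (w t - m)| ≤ ∫ t in ξ..(ξ + h), |w t - m| :=
      intervalIntegral.abs_integral_le_integral_abs hξd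
    have hsplit : (∫ t in ξ..(ξ + h), (w t - m))
        = (∫ t in ξ..(ξ + h), w t) - h * m := by
      rw [intervalIntegral.integral_sub (hIcd.mono_set hsub2) intervalIntegrable_const,
        hconst2]
    rw [hsplit] at hle habs
    linarith
  have hsplitg : (∫ t in (ξ - h)..(ξ + h), |w t - m|)
      = (∫ t in (ξ - h)..ξ, |w t - m|) + ∫ t in ξ..(ξ + h), |w t - m| :=
    (intervalIntegral.integral_add_adjacent_intervals hIg1 hIg2).symm
  have hbig : 2 * (C + 1) * h ≤ ∫ t in (ξ - h)..(ξ + h), |w t - m| := by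
    rw [hsplitg]; linarith
  rw [div_le_iff₀ (by linarith : (0:ℝ) < (ξ + h) - (ξ - h))] at hC
  nlinarith [hh0]

/-- If `w ∈ L¹(a,b)` has a type-A singularity at `ξ ∈ (a,b)` (the symmetric averages
diverge to `+∞`), then `w` is not of bounded mean oscillation on `(a,b)`: there is no
uniform bound on the mean oscillation of `w` over subintervals `[c,d] ⊆ (a,b)`. -/
theorem stmt1 (a b ξ : ℝ) (w : ℝ → ℝ)
    (hw : MeasureTheory.IntegrableOn w (Set.Ioo a b))
    (hξ : ξ ∈ Set.Ioo a b)
    (hdiv : ∀ M : ℝ, ∃ δ > 0, ∀ h : ℝ, h ≠ 0 → |h| < δ →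
      (∫ t in ξ..(ξ + h), w t) / |h| ≥ M) :
    ¬ ∃ C : ℝ, ∀ c d : ℝ, a < c → c < d → d < b →
      (∫ t in c..d, |w t - (∫ s in c..d, w s) / (d - c)|) / (d - c) ≤ C := by
  rintro ⟨C, hC⟩
  obtain ⟨δ, hδ, hM⟩ := hdiv (C + 1)
  obtain ⟨ha, hb⟩ := hξ
  obtain ⟨h, hh0, hhδ, hha, hhb⟩ :
      ∃ h : ℝ, 0 < h ∧ h < δ ∧ h < ξ - a ∧ h < b - ξ := by
    refine ⟨min δ (min (ξ - a) (b - ξ)) / 2, ?_, ?_, ?_, ?_⟩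
    · have : 0 < min δ (min (ξ - a) (b - ξ)) := by
        simp only [lt_min_iff]; exact ⟨hδ, by linarith, by linarith⟩
      linarith
    · have := min_le_left δ (min (ξ - a) (b - ξ)); linarith
    · have := (min_le_right δ (min (ξ - a) (b - ξ))).trans
        (min_le_left (ξ - a) (b - ξ)); linarith
    · have := (min_le_right δ (min (ξ - a) (b - ξ))).trans
        (min_le_right (ξ - a) (b - ξ)); linarith
  have habs_h : |h| = h := abs_of_pos hh0
  have hsub : Set.Icc (ξ - h) (ξ + h) ⊆ Set.Ioo a b := fun x hx =>
    ⟨by have := hx.1; simp only [Set.mem_Icc] at hx; linarith [hx.1],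
     by simp only [Set.mem_Icc] at hx; linarith [hx.2]⟩
  have hIcd : IntervalIntegrable w MeasureTheory.volume (ξ - h) (ξ + h) :=
    MeasureTheory.IntegrableOn.intervalIntegrable
      (by rw [Set.uIcc_of_le (by linarith : ξ - h ≤ ξ + h)]; exact hw.mono_set hsub)
  have h1 : (C + 1) * h ≤ ∫ t in ξ..(ξ + h), w t := by
    have := hM h (ne_of_gt hh0) (by rw [habs_h]; exact hhδ)
    rw [ge_iff_le, le_div_iff₀ (by rw [habs_h]; exact hh0)] at this
    rw [habs_h] at this
    linarith
  have h2 : (C + 1) * h ≤ -∫ t in (ξ - h)..ξ, w t := by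
    have := hM (-h) (by simp [ne_of_gt hh0]) (by rw [abs_neg, habs_h]; exact hhδ)
    rw [ge_iff_le, le_div_iff₀ (by rw [abs_neg, habs_h]; exact hh0)] at this
    rw [abs_neg, habs_h] at this
    have heq : ξ + -h = ξ - h := by ring
    rw [heq, intervalIntegral.integral_symm] at this
    linarith
  exact osc_lower ξ h C (ξ - h) (ξ + h) w rfl rfl hh0 hIcd h1 h2
    (hC (ξ - h) (ξ + h) (by linarith) (by linarith) (by linarith))
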